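/- For every real x and every h > 0, SIR1(x,h) = SIR2(x,h) if and only if p_t·(h²)² + B(x)·h² + C(x) = 0, where B(x) = p_t·(X−x)² + p_t·(D−x)² − p_u·κ·(D−X)² + Y²·(p_t − p_u·κ) and C(x) = p_t·(D−x)²·((X−x)² + Y²) − p_u·κ·x²·(Y² + (D−X)²). Moreover, if B(x)² − 4·p_t·C(x) ≥ 0, this holds if and only if h² = Λ⁺(x) or h² = Λ⁻(x), where Λ^{±}(x) = (−B(x) ± sqrt(B(x)² − 4·p_t·C(x)))/(2·p_t). -/

import Mathlib

/-- SIR at the UAV located at (x,0,h). -/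
noncomputable def SIR1 (pt pM X Y x h : ℝ) : ℝ :=
  pt * ((x - X) ^ 2 + Y ^ 2 + h ^ 2) / (pM * (x ^ 2 + h ^ 2))

/-- SIR at the Rx when the UAV is located at (x,0,h). -/
noncomputable def SIR2 (pu κ pM D X Y x h : ℝ) : ℝ :=
  pu * κ * (Y ^ 2 + (D - X) ^ 2) / (pM * ((D - x) ^ 2 + h ^ 2))

/-- Coefficient B(x) of the quadratic in h². -/
noncomputable def Bcoef (pt pu κ D X Y x : ℝ) : ℝ :=
  pt * (X - x) ^ 2 + pt * (D - x) ^ 2 - pu * κ * (D - X) ^ 2 + Y ^ 2 * (pt - pu * κ)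

/-- Coefficient C(x) of the quadratic in h². -/
noncomputable def Ccoef (pt pu κ D X Y x : ℝ) : ℝ :=
  pt * (D - x) ^ 2 * ((X - x) ^ 2 + Y ^ 2) - pu * κ * x ^ 2 * (Y ^ 2 + (D - X) ^ 2)

/-- Λ^{±}(x), given via sign = +1 or -1. -/
noncomputable def Lam (pt pu κ D X Y sign x : ℝ) : ℝ :=
  (-(Bcoef pt pu κ D X Y x) +
    sign * Real.sqrt ((Bcoef pt pu κ D X Y x) ^ 2 - 4 * pt * Ccoef pt pu κ D X Y x)) / (2 * pt)

theorem stmt0 (D X Y pt pu pM κ : ℝ) (hD : 0 < D) (hX0 : 0 ≤ X) (hXD : X ≤ D)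
    (hpt : 0 < pt) (hpu : 0 < pu) (hpM : 0 < pM) (hκ : 0 < κ) :
    ∀ x h : ℝ, 0 < h →
      ((SIR1 pt pM X Y x h = SIR2 pu κ pM D X Y x h ↔
        pt * (h ^ 2) ^ 2 + Bcoef pt pu κ D X Y x * h ^ 2 + Ccoef pt pu κ D X Y x = 0) ∧
      ((Bcoef pt pu κ D X Y x) ^ 2 - 4 * pt * Ccoef pt pu κ D X Y x ≥ 0 →
        (SIR1 pt pM X Y x h = SIR2 pu κ pM D X Y x h ↔
          h ^ 2 = Lam pt pu κ D X Y 1 x ∨ h ^ 2 = Lam pt pu κ D X Y (-1) x))) := by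
  intro x h hh
  have hsq : 0 < h ^ 2 := by positivity
  have d1 : 0 < pM * (x ^ 2 + h ^ 2) := by positivity
  have d2 : 0 < pM * ((D - x) ^ 2 + h ^ 2) := by positivity
  have key : SIR1 pt pM X Y x h = SIR2 pu κ pM D X Y x h ↔
      pt * (h ^ 2) ^ 2 + Bcoef pt pu κ D X Y x * h ^ 2 + Ccoef pt pu κ D X Y x = 0 := by
    rw [SIR1, SIR2, div_eq_div_iff d1.ne' d2.ne', ← sub_eq_zero]
    have expand : pt * ((x - X) ^ 2 + Y ^ 2 + h ^ 2) * (pM * ((D - x) ^ 2 + h ^ 2)) -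
        pu * κ * (Y ^ 2 + (D - X) ^ 2) * (pM * (x ^ 2 + h ^ 2)) =
        pM * (pt * (h ^ 2) ^ 2 + Bcoef pt pu κ D X Y x * h ^ 2 + Ccoef pt pu κ D X Y x) := by
      rw [Bcoef, Ccoef]; ring
    rw [expand, mul_eq_zero]
    simp [hpM.ne']
  refine ⟨key, fun hdisc => ?_⟩
  rw [key]
  set B := Bcoef pt pu κ D X Y x with hB
  set C := Ccoef pt pu κ D X Y x with hC
  have hs : Real.sqrt (B ^ 2 - 4 * pt * C) ^ 2 = B ^ 2 - 4 * pt * C :=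
    Real.sq_sqrt hdisc
  have hfac : ∀ t : ℝ, pt * t ^ 2 + B * t + C =
      pt * (t - Lam pt pu κ D X Y 1 x) * (t - Lam pt pu κ D X Y (-1) x) := by
    intro t
    rw [Lam, Lam, ← hB, ← hC]
    have hpt' : pt ≠ 0 := hpt.ne'
    field_simp
    linear_combination Real.sq_sqrt (show (0:ℝ) ≤ B ^ 2 - pt * C * 4 by linarith)
  constructor
  · intro hEq
    rw [hfac] at hEq
    rcases mul_eq_zero.1 hEq with h1 | h1
    · rcases mul_eq_zero.1 h1 with h1 | h1
      · exact absurd h1 hpt.ne'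
      · exact Or.inl (sub_eq_zero.1 h1)
    · exact Or.inr (sub_eq_zero.1 h1)
  · rintro (hEq | hEq) <;> rw [hfac, hEq] <;> ring
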